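/- For every integer m > 2, the border rank of the tensor T_{BCLRS,m} is at least 3m − 2. -/

import Mathlib

/-- A simple (rank-one) tensor in coordinates: `(u ⊗ v ⊗ w)_{ijk} = u_i v_j w_k`. -/
def simpleTensor {ι₁ ι₂ ι₃ : Type} (u : ι₁ → ℂ) (v : ι₂ → ℂ) (w : ι₃ → ℂ) :
    ι₁ → ι₂ → ι₃ → ℂ :=
  fun i j k => u i * v j * w k

/-- The set of tensors of rank at most `r`: sums of `r` simple tensors. -/
def rankAtMost (ι₁ ι₂ ι₃ : Type) (r : ℕ) : Set (ι₁ → ι₂ → ι₃ → ℂ) :=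
  {T | ∃ u : Fin r → ι₁ → ℂ, ∃ v : Fin r → ι₂ → ℂ, ∃ w : Fin r → ι₃ → ℂ,
    T = ∑ s : Fin r, simpleTensor (u s) (v s) (w s)}

/-- The border rank of a tensor: the least `r` such that `T` lies in the closure of the
set of tensors of rank at most `r`. -/
noncomputable def borderRank {ι₁ ι₂ ι₃ : Type} (T : ι₁ → ι₂ → ι₃ → ℂ) : ℕ :=
  sInf {r : ℕ | T ∈ closure (rankAtMost ι₁ ι₂ ι₃ r)}

/-- The matrix multiplication tensor `M_{⟨n,m,p⟩} = ∑ x^i_j ⊗ y^j_k ⊗ z^k_i`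
in coordinates: the first factor is indexed by pairs `(i,j)`, the second by `(j,k)`,
the third by `(k,i)`. -/
def matMulTensor (n m p : ℕ) :
    (Fin n × Fin m) → (Fin m × Fin p) → (Fin p × Fin n) → ℂ :=
  fun x y z => if x.2 = y.1 ∧ y.2 = z.1 ∧ z.2 = x.1 then 1 else 0

/-- The BCLRS tensor `T_{BCLRS,m} = M_{⟨m,2,2⟩} − x^1_1 ⊗ (y^1_1 ⊗ z^1_1 + y^1_2 ⊗ z^2_1)`
(indices written 1-based in the literature, 0-based here). -/
def TBCLRS (m : ℕ) : (Fin m × Fin 2) → (Fin 2 × Fin 2) → (Fin 2 × Fin m) → ℂ :=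
  fun x y z =>
    matMulTensor m 2 2 x y z -
      (if x.1.val = 0 ∧ x.2.val = 0 then 1 else 0) *
        ((if y.1.val = 0 ∧ y.2.val = 0 then 1 else 0) *
            (if z.1.val = 0 ∧ z.2.val = 0 then 1 else 0) +
          (if y.1.val = 0 ∧ y.2.val = 1 then 1 else 0) *
            (if z.1.val = 1 ∧ z.2.val = 0 then 1 else 0))

namespace BCLRS

noncomputable def lc (t u s : Fin 3) : ℂ :=
  if (t.1 = 0 ∧ u.1 = 1 ∧ s.1 = 2) ∨ (t.1 = 1 ∧ u.1 = 2 ∧ s.1 = 0) ∨ (t.1 = 2 ∧ u.1 = 0 ∧ s.1 = 1)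
    then 1
  else if (t.1 = 0 ∧ u.1 = 2 ∧ s.1 = 1) ∨ (t.1 = 2 ∧ u.1 = 1 ∧ s.1 = 0) ∨
      (t.1 = 1 ∧ u.1 = 0 ∧ s.1 = 2)
    then -1 else 0

def cjk (j k : Fin 2) : Fin 3 := ⟨j.1 + k.1, by omega⟩

noncomputable def Kv (v : (Fin 2 × Fin 2) → ℂ) : Matrix (Fin 3) (Fin 3) ℂ :=
  Matrix.of fun s t => ∑ jb : Fin 2, ∑ kb : Fin 2, lc t (cjk jb kb) s * v (jb, kb)

lemma Kv_eq (v : (Fin 2 × Fin 2) → ℂ) :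
    Kv v = !![0, v (1,1), -(v (0,1) + v (1,0));
              -(v (1,1)), 0, v (0,0);
              v (0,1) + v (1,0), -(v (0,0)), 0] := by
  ext s t
  fin_cases s <;> fin_cases t <;>
    simp [Kv, lc, cjk, Fin.sum_univ_two] <;> ring

lemma Kv_factor (v : (Fin 2 × Fin 2) → ℂ) :
    ∃ P : Matrix (Fin 3) (Fin 2) ℂ, ∃ Q : Matrix (Fin 2) (Fin 3) ℂ, Kv v = P * Q := by
  set p0 := v (0,0) with hp0
  set p1 := v (0,1) + v (1,0) with hp1
  set p2 := v (1,1) with hp2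
  have hK : Kv v = !![0, p2, -p1; -p2, 0, p0; p1, -p0, 0] := by
    rw [Kv_eq]
  by_cases h0 : p0 ≠ 0
  · refine ⟨!![-p1/p0, -p2/p0; 1, 0; 0, 1], !![-p2, 0, p0; p1, -p0, 0], ?_⟩
    rw [hK]; ext s t
    fin_cases s <;> fin_cases t <;>
      simp [Matrix.mul_apply, Fin.sum_univ_two, Matrix.vecHead, Matrix.vecTail] <;> (try field_simp) <;> (try ring)
  push_neg at h0
  by_cases h2 : p2 ≠ 0
  · refine ⟨!![1, 0; 0, 1; 0, -p1/p2], !![0, p2, -p1; -p2, 0, p0], ?_⟩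
    rw [hK]; ext s t
    fin_cases s <;> fin_cases t <;>
      simp [Matrix.mul_apply, Fin.sum_univ_two, Matrix.vecHead, Matrix.vecTail, h0] <;> (try field_simp) <;> (try ring)
  push_neg at h2
  · refine ⟨!![0, -p1; 0, 0; p1, 0], !![1, 0, 0; 0, 0, 1], ?_⟩
    rw [hK]; ext s t
    fin_cases s <;> fin_cases t <;>
      simp [Matrix.mul_apply, Fin.sum_univ_two, Matrix.vecHead, Matrix.vecTail, h0, h2]


noncomputable def phi (m : ℕ) (T : (Fin m × Fin 2) → (Fin 2 × Fin 2) → (Fin 2 × Fin m) → ℂ) :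
    Matrix (Fin 3 × Fin 2 × Fin m) (Fin 3 × Fin m × Fin 2) ℂ :=
  Matrix.of fun r c => ∑ jb : Fin 2, ∑ kb : Fin 2,
    lc c.1 (cjk jb kb) r.1 * T (c.2.1, c.2.2) (jb, kb) (r.2.1, r.2.2)

abbrev Idx (n : ℕ) : Type := Unit ⊕ (Fin 6 × Fin (n + 2))

def ds (b : Fin 6) : Fin 3 := ⟨b.1 / 2, by omega⟩
def dk (b : Fin 6) : Fin 2 := ⟨b.1 % 2, by omega⟩

def rowSel (n : ℕ) : Idx n → Fin 3 × Fin 2 × Fin (n + 3)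
  | .inl _ => (2, 0, 0)
  | .inr (b, a) => (ds b, dk b, a.succ)

def colSel (n : ℕ) : Idx n → Fin 3 × Fin (n + 3) × Fin 2
  | .inl _ => (0, 0, 1)
  | .inr (b, a) => (ds b, a.succ, dk b)

noncomputable def subM (n : ℕ)
    (T : (Fin (n + 3) × Fin 2) → (Fin 2 × Fin 2) → (Fin 2 × Fin (n + 3)) → ℂ) :
    Matrix (Idx n) (Idx n) ℂ :=
  Matrix.of fun x y => phi (n + 3) T (rowSel n x) (colSel n y)

lemma phi_simple (m : ℕ) (u : (Fin m × Fin 2) → ℂ) (v : (Fin 2 × Fin 2) → ℂ)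
    (w : (Fin 2 × Fin m) → ℂ) (r : Fin 3 × Fin 2 × Fin m) (c : Fin 3 × Fin m × Fin 2) :
    phi m (simpleTensor u v w) r c
      = u (c.2.1, c.2.2) * (Kv v r.1 c.1 * w (r.2.1, r.2.2)) := by
  simp [phi, Kv, simpleTensor, Fin.sum_univ_two]
  ring

lemma subM_simple_factor (n : ℕ) (u : (Fin (n + 3) × Fin 2) → ℂ) (v : (Fin 2 × Fin 2) → ℂ)
    (w : (Fin 2 × Fin (n + 3)) → ℂ) :
    ∃ P : Matrix (Idx n) (Fin 2) ℂ, ∃ Q : Matrix (Fin 2) (Idx n) ℂ,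
      subM n (simpleTensor u v w) = P * Q := by
  obtain ⟨P', Q', hK⟩ := Kv_factor v
  refine ⟨Matrix.of fun x l => w ((rowSel n x).2.1, (rowSel n x).2.2) * P' (rowSel n x).1 l,
          Matrix.of fun l y => Q' l (colSel n y).1 * u ((colSel n y).2.1, (colSel n y).2.2), ?_⟩
  ext x y
  have hKst : ∀ s t, Kv v s t = ∑ l : Fin 2, P' s l * Q' l t := by
    intro s t; rw [hK]; rfl
  simp only [subM, Matrix.of_apply, Matrix.mul_apply, phi_simple, hKst, Finset.mul_sum,
    Finset.sum_mul]
  refine Finset.sum_congr rfl fun l _ => by ring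


lemma card_Idx (n : ℕ) : Fintype.card (Idx n) = 6 * n + 13 := by
  simp [Fintype.card_sum, Fintype.card_prod]
  omega

lemma det_subM_eq_zero (n r : ℕ) (hr : r ≤ 3 * n + 6)
    (T : (Fin (n + 3) × Fin 2) → (Fin 2 × Fin 2) → (Fin 2 × Fin (n + 3)) → ℂ)
    (hT : T ∈ rankAtMost (Fin (n + 3) × Fin 2) (Fin 2 × Fin 2) (Fin 2 × Fin (n + 3)) r) :
    (subM n T).det = 0 := by
  obtain ⟨u, v, w, rfl⟩ := hT
  choose P Q hPQ using fun s : Fin r => subM_simple_factor n (u s) (v s) (w s)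
  have hM : subM n (∑ s : Fin r, simpleTensor (u s) (v s) (w s))
      = (Matrix.of fun x (l : Fin r × Fin 2) => P l.1 x l.2)
        * (Matrix.of fun (l : Fin r × Fin 2) y => Q l.1 l.2 y) := by
    ext x y
    have h1 : subM n (∑ s : Fin r, simpleTensor (u s) (v s) (w s)) x y
        = ∑ s : Fin r, subM n (simpleTensor (u s) (v s) (w s)) x y := by
      simp [subM, phi, Finset.sum_apply, Fin.sum_univ_two, Finset.mul_sum,
        ← Finset.sum_add_distrib]
    rw [h1]
    simp only [Matrix.mul_apply, Fintype.sum_prod_type, Matrix.of_apply]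
    refine Finset.sum_congr rfl fun s _ => ?_
    rw [hPQ s, Matrix.mul_apply]
  by_contra hdet
  have hu : IsUnit (subM n (∑ s : Fin r, simpleTensor (u s) (v s) (w s))) :=
    (Matrix.isUnit_iff_isUnit_det _).mpr (isUnit_iff_ne_zero.mpr hdet)
  have hrank := Matrix.rank_of_isUnit _ hu
  have hle : (subM n (∑ s : Fin r, simpleTensor (u s) (v s) (w s))).rank
      ≤ Fintype.card (Fin r × Fin 2) := by
    rw [hM]
    exact le_trans (Matrix.rank_mul_le_left _ _) (Matrix.rank_le_card_width _)
  rw [hrank, card_Idx] at hle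
  simp [Fintype.card_prod] at hle
  omega



lemma cont_det_subM (n : ℕ) :
    Continuous fun T : (Fin (n + 3) × Fin 2) → (Fin 2 × Fin 2) → (Fin 2 × Fin (n + 3)) → ℂ =>
      (subM n T).det := by
  apply Continuous.matrix_det
  apply continuous_matrix
  intro x y
  simp only [subM, phi, Matrix.of_apply]
  apply continuous_finset_sum
  intro jb _
  apply continuous_finset_sum
  intro kb _
  exact continuous_const.mul
    ((continuous_apply _).comp ((continuous_apply _).comp (continuous_apply _)))

lemma phi_TB (m : ℕ) (s t : Fin 3) (k j : Fin 2) (i2 i : Fin m)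
    (h : i.val ≠ 0 ∨ j.val ≠ 0) :
    phi m (TBCLRS m) (s, k, i2) (t, i, j)
      = if i2 = i then lc t (cjk j k) s else 0 := by
  have hcorr : ∀ jb kb : Fin 2,
      TBCLRS m (i, j) (jb, kb) (k, i2)
        = if j = jb ∧ kb = k ∧ i2 = i then 1 else 0 := by
    intro jb kb
    rcases h with h | h <;>
      simp [TBCLRS, matMulTensor, h]
  simp only [phi, Matrix.of_apply, hcorr]
  by_cases hi2 : i2 = i
  · subst hi2
    fin_cases j <;> fin_cases k <;>
      simp [Fin.sum_univ_two, cjk]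
  · simp [hi2]

noncomputable def M6 : Matrix (Fin 6) (Fin 6) ℂ :=
  Matrix.of fun b b' => lc (ds b') (cjk (dk b') (dk b)) (ds b)

lemma M6_eq : M6 = !![0, 0, 0, 0, 0, -1;
                      0, 0, 0, 1, -1, 0;
                      0, 0, 0, 0, 1, 0;
                      0, -1, 0, 0, 0, 0;
                      0, 1, -1, 0, 0, 0;
                      1, 0, 0, 0, 0, 0] := by
  ext b b'
  fin_cases b <;> fin_cases b' <;>
    simp (config := { decide := true }) [M6, lc, cjk, ds, dk, Matrix.vecHead, Matrix.vecTail] <;>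
    rfl

set_option maxRecDepth 10000 in
set_option maxHeartbeats 2000000 in
lemma det_M6 : M6.det = 1 := by
  rw [M6_eq]
  simp [Matrix.det_succ_row_zero, Fin.sum_univ_succ]
  simp [Fin.succAbove, Fin.lt_def]
  norm_num

lemma toBlocks21 (n : ℕ) : (subM n (TBCLRS (n + 3))).toBlocks₂₁ = 0 := by
  ext ⟨b, a⟩ x
  simp only [Matrix.toBlocks₂₁, subM, Matrix.of_apply, rowSel, colSel]
  rw [phi_TB (n + 3) _ _ _ _ _ _ (Or.inr (by norm_num))]
  simp [Fin.succ_ne_zero]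

lemma toBlocks11 (n : ℕ) : (subM n (TBCLRS (n + 3))).toBlocks₁₁.det = 1 := by
  rw [Matrix.det_unique]
  simp only [Matrix.toBlocks₁₁, subM, Matrix.of_apply, rowSel, colSel]
  rw [phi_TB (n + 3) _ _ _ _ _ _ (Or.inr (by norm_num))]
  simp [lc, cjk]

lemma toBlocks22 (n : ℕ) :
    (subM n (TBCLRS (n + 3))).toBlocks₂₂
      = Matrix.blockDiagonal (fun _ : Fin (n + 2) => M6) := by
  ext ⟨b, a⟩ ⟨b', a'⟩
  simp only [Matrix.toBlocks₂₂, subM, Matrix.of_apply, rowSel, colSel,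
    Matrix.blockDiagonal_apply]
  rw [phi_TB (n + 3) _ _ _ _ _ _ (Or.inl (by simp [Fin.succ_ne_zero]))]
  by_cases h : a = a'
  · subst h
    simp [M6]
  · have : a.succ ≠ a'.succ := fun hc => h (Fin.succ_injective _ hc)
    simp [h, this]

lemma det_subM_TB (n : ℕ) : (subM n (TBCLRS (n + 3))).det = 1 := by
  rw [← Matrix.fromBlocks_toBlocks (subM n (TBCLRS (n + 3))), toBlocks21,
    Matrix.det_fromBlocks_zero₂₁, toBlocks11, toBlocks22, Matrix.det_blockDiagonal]
  simp [det_M6]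


lemma mem_rankAtMost_card {ι₁ ι₂ ι₃ : Type} [Fintype ι₁] [Fintype ι₂] [Fintype ι₃]
    [DecidableEq ι₁] [DecidableEq ι₂] [DecidableEq ι₃] (T : ι₁ → ι₂ → ι₃ → ℂ) :
    T ∈ rankAtMost ι₁ ι₂ ι₃ (Fintype.card (ι₁ × ι₂ × ι₃)) := by
  set E := (Fintype.equivFin (ι₁ × ι₂ × ι₃)).symm with hE
  refine ⟨fun s a => if a = (E s).1 then T (E s).1 (E s).2.1 (E s).2.2 else 0,
          fun s b => if b = (E s).2.1 then 1 else 0,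
          fun s c => if c = (E s).2.2 then 1 else 0, ?_⟩
  funext a b c
  have h1 : (∑ s : Fin (Fintype.card (ι₁ × ι₂ × ι₃)),
      simpleTensor (fun a => if a = (E s).1 then T (E s).1 (E s).2.1 (E s).2.2 else 0)
        (fun b => if b = (E s).2.1 then 1 else 0)
        (fun c => if c = (E s).2.2 then 1 else 0)) a b c
      = ∑ s : Fin (Fintype.card (ι₁ × ι₂ × ι₃)),
          (if a = (E s).1 then T (E s).1 (E s).2.1 (E s).2.2 else 0)
            * (if b = (E s).2.1 then 1 else 0) * (if c = (E s).2.2 then 1 else 0) := by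
    simp [simpleTensor, Finset.sum_apply]
  rw [h1, Equiv.sum_comp E (fun x : ι₁ × ι₂ × ι₃ =>
    (if a = x.1 then T x.1 x.2.1 x.2.2 else 0)
      * (if b = x.2.1 then 1 else 0) * (if c = x.2.2 then 1 else 0))]
  simp [Fintype.sum_prod_type, Finset.sum_ite_eq, ite_mul, mul_ite]

end BCLRS

/-- For every integer `m > 2`, the border rank of `T_{BCLRS,m}` is at least `3m - 2`. -/
theorem borderRank_TBCLRS_lower_bound (m : ℕ) (hm : 2 < m) :
    3 * m - 2 ≤ borderRank (TBCLRS m) := by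
  obtain ⟨n, rfl⟩ : ∃ n, m = n + 3 := ⟨m - 3, by omega⟩
  have hne : {r : ℕ | TBCLRS (n + 3) ∈ closure
      (rankAtMost (Fin (n + 3) × Fin 2) (Fin 2 × Fin 2) (Fin 2 × Fin (n + 3)) r)}.Nonempty :=
    ⟨_, subset_closure (BCLRS.mem_rankAtMost_card _)⟩
  have hmem := Nat.sInf_mem hne
  by_contra hlt
  push_neg at hlt
  rw [borderRank] at hlt
  have hr0le : sInf {r : ℕ | TBCLRS (n + 3) ∈ closure
      (rankAtMost (Fin (n + 3) × Fin 2) (Fin 2 × Fin 2) (Fin 2 × Fin (n + 3)) r)} ≤ 3 * n + 6 := by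
    omega
  have hclosed : IsClosed {T : (Fin (n + 3) × Fin 2) → (Fin 2 × Fin 2) → (Fin 2 × Fin (n + 3)) → ℂ |
      (BCLRS.subM n T).det = 0} :=
    isClosed_eq (BCLRS.cont_det_subM n) continuous_const
  have hzero : (BCLRS.subM n (TBCLRS (n + 3))).det = 0 :=
    closure_minimal (fun T hT => BCLRS.det_subM_eq_zero n _ hr0le T hT) hclosed hmem
  rw [BCLRS.det_subM_TB n] at hzero
  exact one_ne_zero hzero
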